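/- Let A = (a_ijk) be a third order 3-dimensional symmetric tensor with entries in {-1, 0, 1} satisfying a₁₂₂ = a₁₃₃ = 1 and a₁₂₃ = 1. Then A is strictly copositive if and only if a_iii = 1 and a_iij + a_ijj ≥ 0 for all i ≠ j in {1,2,3}. -/

import Mathlib

private lemma cube_mono {a b : ℝ} (h : a ≤ b) : a^3 ≤ b^3 := by
  nlinarith [sq_nonneg (a+b), sq_nonneg a, sq_nonneg b]

private lemma keyL (x y z : ℝ) (hx : 0 ≤ x) (hy : 0 ≤ y) (hz : 0 ≤ z) (hs : 0 < x + y + z) :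
    0 < x^3+y^3+z^3 - 3*x^2*y + 3*x*y^2 - 3*x^2*z + 3*x*z^2 - 3*y^2*z + 3*y*z^2 + 6*x*y*z := by
  have e : x^3+y^3+z^3 - 3*x^2*y + 3*x*y^2 - 3*x^2*z + 3*x*z^2 - 3*y^2*z + 3*y*z^2 + 6*x*y*z
      = (x-(y+z))^3 + (y+z)^3 + (y-z)^3 + 2*z^3 := by ring
  rw [e]
  have c1 : (-(y+z))^3 ≤ (x-(y+z))^3 := cube_mono (by linarith)
  have c2 : (-z)^3 ≤ (y-z)^3 := cube_mono (by linarith)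
  rcases eq_or_lt_of_le hz with h | h
  · subst h
    rcases eq_or_lt_of_le hy with h' | h'
    · subst h'
      have hx' : 0 < x := by linarith
      nlinarith [pow_pos hx' 3]
    · nlinarith [pow_pos h' 3, c1]
  · nlinarith [pow_pos h 3, c1, c2]

theorem stmt_13 (a₁₁₁ a₂₂₂ a₃₃₃ a₁₁₂ a₁₂₂ a₁₁₃ a₁₃₃ a₂₂₃ a₂₃₃ a₁₂₃ : ℝ)
    (hset : ∀ c ∈ [a₁₁₁, a₂₂₂, a₃₃₃, a₁₁₂, a₁₂₂, a₁₁₃, a₁₃₃, a₂₂₃, a₂₃₃, a₁₂₃],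
      c ∈ ({-1, 0, 1} : Set ℝ))
    (h122 : a₁₂₂ = 1) (h133 : a₁₃₃ = 1) (h123 : a₁₂₃ = 1) :
    (∀ x₁ x₂ x₃ : ℝ, 0 ≤ x₁ → 0 ≤ x₂ → 0 ≤ x₃ → (x₁, x₂, x₃) ≠ (0, 0, 0) →
      0 < a₁₁₁*x₁^3 + a₂₂₂*x₂^3 + a₃₃₃*x₃^3 + 3*a₁₁₂*x₁^2*x₂ + 3*a₁₂₂*x₁*x₂^2
          + 3*a₁₁₃*x₁^2*x₃ + 3*a₁₃₃*x₁*x₃^2 + 3*a₂₂₃*x₂^2*x₃ + 3*a₂₃₃*x₂*x₃^2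
          + 6*a₁₂₃*x₁*x₂*x₃) ↔
    (a₁₁₁ = 1 ∧ a₂₂₂ = 1 ∧ a₃₃₃ = 1 ∧
      a₁₁₂ + a₁₂₂ ≥ 0 ∧ a₁₁₃ + a₁₃₃ ≥ 0 ∧ a₂₂₃ + a₂₃₃ ≥ 0) := by
  have m111 : a₁₁₁ = -1 ∨ a₁₁₁ = 0 ∨ a₁₁₁ = 1 := by simpa using hset a₁₁₁ (by simp)
  have m222 : a₂₂₂ = -1 ∨ a₂₂₂ = 0 ∨ a₂₂₂ = 1 := by simpa using hset a₂₂₂ (by simp)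
  have m333 : a₃₃₃ = -1 ∨ a₃₃₃ = 0 ∨ a₃₃₃ = 1 := by simpa using hset a₃₃₃ (by simp)
  have m112 : a₁₁₂ = -1 ∨ a₁₁₂ = 0 ∨ a₁₁₂ = 1 := by simpa using hset a₁₁₂ (by simp)
  have m113 : a₁₁₃ = -1 ∨ a₁₁₃ = 0 ∨ a₁₁₃ = 1 := by simpa using hset a₁₁₃ (by simp)
  have m223 : a₂₂₃ = -1 ∨ a₂₂₃ = 0 ∨ a₂₂₃ = 1 := by simpa using hset a₂₂₃ (by simp)
  have m233 : a₂₃₃ = -1 ∨ a₂₃₃ = 0 ∨ a₂₃₃ = 1 := by simpa using hset a₂₃₃ (by simp)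
  constructor
  · intro h
    have h1 := h 1 0 0 (by norm_num) le_rfl le_rfl (by simp)
    have h2 := h 0 1 0 le_rfl (by norm_num) le_rfl (by simp)
    have h3 := h 0 0 1 le_rfl le_rfl (by norm_num) (by simp)
    norm_num at h1 h2 h3
    have e1 : a₁₁₁ = 1 := by rcases m111 with h|h|h <;> [linarith; linarith; exact h]
    have e2 : a₂₂₂ = 1 := by rcases m222 with h|h|h <;> [linarith; linarith; exact h]
    have e3 : a₃₃₃ = 1 := by rcases m333 with h|h|h <;> [linarith; linarith; exact h]
    refine ⟨e1, e2, e3, ?_, ?_, ?_⟩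
    · rcases m112 with h|h|h <;> rw [h, h122] <;> norm_num
    · rcases m113 with h|h|h <;> rw [h, h133] <;> norm_num
    · have h4 := h 0 1 1 le_rfl (by norm_num) (by norm_num) (by simp)
      rw [e2, e3] at h4
      norm_num at h4
      rcases m223 with h|h|h <;> rcases m233 with h'|h'|h' <;> rw [h, h'] <;>
        rw [h, h'] at h4 <;> norm_num at h4 <;> norm_num
  · rintro ⟨e1, e2, e3, g1, g2, g3⟩
    intro x₁ x₂ x₃ hx1 hx2 hx3 hne
    have hs : 0 < x₁ + x₂ + x₃ := by
      rcases (by positivity : (0:ℝ) ≤ x₁ + x₂ + x₃).lt_or_eq with h | h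
      · exact h
      · exfalso; apply hne
        have : x₁ = 0 ∧ x₂ = 0 ∧ x₃ = 0 := ⟨by linarith, by linarith, by linarith⟩
        simp [this.1, this.2.1, this.2.2]
    have b112 : -1 ≤ a₁₁₂ := by rcases m112 with h|h|h <;> rw [h] <;> norm_num
    have b113 : -1 ≤ a₁₁₃ := by rcases m113 with h|h|h <;> rw [h] <;> norm_num
    have b223 : -1 ≤ a₂₂₃ := by rcases m223 with h|h|h <;> rw [h] <;> norm_num
    have b233 : -1 ≤ a₂₃₃ := by rcases m233 with h|h|h <;> rw [h] <;> norm_num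
    rw [e1, e2, e3, h122, h133, h123]
    have p1 : 0 ≤ (a₁₁₂ + 1) * (x₁^2 * x₂) := mul_nonneg (by linarith) (by positivity)
    have p2 : 0 ≤ (a₁₁₃ + 1) * (x₁^2 * x₃) := mul_nonneg (by linarith) (by positivity)
    rcases le_total x₃ x₂ with h | h
    · have p3 : 0 ≤ (a₂₂₃ + 1) * (x₂ * x₃ * (x₂ - x₃)) :=
        mul_nonneg (by linarith) (mul_nonneg (mul_nonneg hx2 hx3) (by linarith))
      have p4 : 0 ≤ (a₂₂₃ + a₂₃₃) * (x₂ * x₃^2) := mul_nonneg (by linarith) (by positivity)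
      have K := keyL x₁ x₂ x₃ hx1 hx2 hx3 hs
      nlinarith [p1, p2, p3, p4, K]
    · have p3 : 0 ≤ (a₂₃₃ + 1) * (x₂ * x₃ * (x₃ - x₂)) :=
        mul_nonneg (by linarith) (mul_nonneg (mul_nonneg hx2 hx3) (by linarith))
      have p4 : 0 ≤ (a₂₂₃ + a₂₃₃) * (x₂^2 * x₃) := mul_nonneg (by linarith) (by positivity)
      have K := keyL x₁ x₃ x₂ hx1 hx3 hx2 (by linarith)
      nlinarith [p1, p2, p3, p4, K]
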